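/- Let F_lin = { x ↦ θᵀx : θ ∈ ℝ^d, ‖θ‖₂ ≤ τ } be the class of bounded linear functions on the domain X = { x ∈ ℝ^d : ‖x‖₂ ≤ γ }, where τ, γ > 0. Then there exists a universal constant C > 0 such that for all ε ∈ (0, τ·γ], the ε-eluder dimension satisfies d_E(F_lin, ε) ≤ C·d·log(1 + τ·γ/ε). -/

import Mathlib

/-!
Statement 11: the `ε`-eluder dimension of the class of bounded linear functions
`F_lin = {x ↦ θᵀx : ‖θ‖₂ ≤ τ}` on `X = {x : ‖x‖₂ ≤ γ}` is at most `C·d·log(1 + τγ/ε)`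
for a universal constant `C > 0`, for every `ε ∈ (0, τγ]`.
-/

noncomputable section
open scoped RealInnerProductSpace

/-- `x` is `ε`-dependent on the list `xs` with respect to the function class `G`:
any `g₁, g₂ ∈ G` with `√(Σ_j ‖g₁(x_j) - g₂(x_j)‖²) ≤ ε` also satisfy
`‖g₁(x) - g₂(x)‖ ≤ ε`. -/
def EpsDependent {X E : Type*} [NormedAddCommGroup E] (G : Set (X → E)) (ε : ℝ)
    (x : X) (xs : List X) : Prop :=
  ∀ g₁ ∈ G, ∀ g₂ ∈ G,
    Real.sqrt ((xs.map fun y => ‖g₁ y - g₂ y‖ ^ 2).sum) ≤ ε → ‖g₁ x - g₂ x‖ ≤ ε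

/-- The set of lengths of sequences in `X` such that, for some `ε' ≥ ε`, every element
is `ε'`-independent of its predecessors. -/
def eluderLengths {X E : Type*} [NormedAddCommGroup E] (G : Set (X → E)) (ε : ℝ) :
    Set ℕ :=
  {l : ℕ | ∃ xs : List X, xs.length = l ∧ ∃ ε' ≥ ε,
    ∀ i : Fin xs.length, ¬ EpsDependent G ε' (xs.get i) (xs.take (i : ℕ))}

/-- The `ε`-eluder dimension: the length of the longest sequence of elements of `X`
such that, for some `ε' ≥ ε`, every element is `ε'`-independent of its predecessors. -/
def eluderDim {X E : Type*} [NormedAddCommGroup E] (G : Set (X → E)) (ε : ℝ) : ℕ :=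
  sSup (eluderLengths G ε)

/-- The class of bounded linear functions `x ↦ θᵀx`, `‖θ‖₂ ≤ τ`, on the ball of
radius `γ` in `ℝ^d`. -/
def linClass (d : ℕ) (τ γ : ℝ) :
    Set ({x : EuclideanSpace ℝ (Fin d) // ‖x‖ ≤ γ} → ℝ) :=
  {g | ∃ θ : EuclideanSpace ℝ (Fin d), ‖θ‖ ≤ τ ∧ g = fun x => ⟪θ, x.1⟫}

namespace EluderAux
open Matrix


open Matrix

variable {d : ℕ}

lemma vecMulVec_mulVec' (a b x : Fin d → ℝ) :
    vecMulVec a b *ᵥ x = (b ⬝ᵥ x) • a := by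
  ext i
  simp only [Matrix.mulVec, vecMulVec_apply, dotProduct, Pi.smul_apply, smul_eq_mul,
    Finset.sum_mul, Finset.mul_sum]
  exact Finset.sum_congr rfl (fun _ _ => by ring)

lemma dot_symm {A : Matrix (Fin d) (Fin d) ℝ} (hA : A.IsHermitian) (x y : Fin d → ℝ) :
    x ⬝ᵥ (A *ᵥ y) = y ⬝ᵥ (A *ᵥ x) := by
  have h : Aᵀ = A := by
    have := hA.eq; rwa [Matrix.conjTranspose_eq_transpose_of_trivial] at this
  conv_lhs => rw [← h]
  rw [Matrix.dotProduct_mulVec, Matrix.vecMul_transpose, dotProduct_comm]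

lemma cs_posdef {A : Matrix (Fin d) (Fin d) ℝ} (hA : A.PosDef) (x y : Fin d → ℝ) :
    (x ⬝ᵥ y)^2 ≤ (x ⬝ᵥ (A *ᵥ x)) * (y ⬝ᵥ (A⁻¹ *ᵥ y)) := by
  have hud : IsUnit A.det := isUnit_iff_ne_zero.mpr hA.det_pos.ne'
  have hinv : A * A⁻¹ = 1 := Matrix.mul_nonsing_inv A hud
  set w := A⁻¹ *ᵥ y with hw
  have hAw : A *ᵥ w = y := by
    rw [hw, Matrix.mulVec_mulVec, hinv, Matrix.one_mulVec]
  have hy : x ⬝ᵥ y = x ⬝ᵥ (A *ᵥ w) := by rw [hAw]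
  have hq : ∀ t : ℝ, 0 ≤ (w ⬝ᵥ (A *ᵥ w)) * (t*t) + (2 * (x ⬝ᵥ y)) * t + (x ⬝ᵥ (A *ᵥ x)) := by
    intro t
    have h0 : 0 ≤ (x + t • w) ⬝ᵥ (A *ᵥ (x + t • w)) := by
      rcases eq_or_ne (x + t • w) 0 with h | h
      · simp [h]
      · exact le_of_lt (by simpa only [star_trivial] using hA.dotProduct_mulVec_pos h)
    have hsymm := dot_symm hA.1 x w
    rw [hy]
    calc (0:ℝ) ≤ (x + t • w) ⬝ᵥ (A *ᵥ (x + t • w)) := h0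
      _ = (w ⬝ᵥ (A *ᵥ w)) * (t*t) + (2 * (x ⬝ᵥ (A *ᵥ w))) * t + (x ⬝ᵥ (A *ᵥ x)) := by
          rw [Matrix.mulVec_add, Matrix.mulVec_smul]
          simp only [add_dotProduct, dotProduct_add, smul_dotProduct,
            dotProduct_smul, smul_eq_mul]
          linear_combination (-t) * hsymm
  have hd := discrim_le_zero hq
  rw [discrim] at hd
  have hww : w ⬝ᵥ (A *ᵥ w) = y ⬝ᵥ (A⁻¹ *ᵥ y) := by
    rw [hAw, dotProduct_comm]
  rw [← hww]
  nlinarith [hd]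



open Matrix

variable {d : ℕ}

lemma det_step {A : Matrix (Fin d) (Fin d) ℝ} (hA : A.PosDef) (x : Fin d → ℝ) :
    (A + vecMulVec x x).det = A.det * (1 + x ⬝ᵥ (A⁻¹ *ᵥ x)) := by
  have hud : IsUnit A.det := isUnit_iff_ne_zero.mpr hA.det_pos.ne'
  rw [Matrix.vecMulVec_eq Unit, Matrix.det_add_replicateCol_mul_replicateRow hud]
  congr 1
  rw [← Matrix.replicateRow_vecMul, Matrix.det_unique, Matrix.add_apply, Matrix.one_apply_eq,
    Matrix.replicateRow_mul_replicateCol_apply, ← Matrix.dotProduct_mulVec]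

lemma quad (δ : ℝ) (k : ℕ) (v : ℕ → (Fin d → ℝ)) (x : Fin d → ℝ) :
    x ⬝ᵥ ((δ^2 • (1 : Matrix (Fin d) (Fin d) ℝ)
        + ∑ j ∈ Finset.range k, vecMulVec (v j) (v j)) *ᵥ x)
      = δ^2 * (x ⬝ᵥ x) + ∑ j ∈ Finset.range k, (v j ⬝ᵥ x)^2 := by
  induction k with
  | zero => simp [Matrix.add_mulVec, Matrix.smul_mulVec, Matrix.one_mulVec]
  | succ k ih =>
    rw [Finset.sum_range_succ, ← add_assoc, Matrix.add_mulVec, dotProduct_add, ih,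
      Finset.sum_range_succ, vecMulVec_mulVec', dotProduct_smul]
    rw [smul_eq_mul, dotProduct_comm x (v k)]
    ring

lemma herm (δ : ℝ) (k : ℕ) (v : ℕ → (Fin d → ℝ)) :
    ((δ^2 • (1 : Matrix (Fin d) (Fin d) ℝ)
        + ∑ j ∈ Finset.range k, vecMulVec (v j) (v j))).IsHermitian := by
  rw [Matrix.IsHermitian, Matrix.conjTranspose_eq_transpose_of_trivial, Matrix.transpose_add,
    Matrix.transpose_smul, Matrix.transpose_one]
  congr 1
  rw [Matrix.transpose_sum]
  refine Finset.sum_congr rfl fun j _ => ?_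
  ext a b
  simp [Matrix.transpose_apply, Matrix.vecMulVec_apply, mul_comm]

lemma posdef {δ : ℝ} (hδ : 0 < δ) (k : ℕ) (v : ℕ → (Fin d → ℝ)) :
    ((δ^2 • (1 : Matrix (Fin d) (Fin d) ℝ)
        + ∑ j ∈ Finset.range k, vecMulVec (v j) (v j))).PosDef := by
  refine Matrix.PosDef.of_dotProduct_mulVec_pos (herm δ k v) fun x hx => ?_
  have : (star x) = x := by simp
  rw [this, quad]
  have hxx : 0 < x ⬝ᵥ x := by
    have h0 : 0 ≤ x ⬝ᵥ x := Finset.sum_nonneg fun i _ => mul_self_nonneg _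
    have hne : x ⬝ᵥ x ≠ 0 := fun h => hx (dotProduct_self_eq_zero.mp h)
    exact h0.lt_of_ne (Ne.symm hne)
  have h2 : 0 ≤ ∑ j ∈ Finset.range k, (v j ⬝ᵥ x)^2 :=
    Finset.sum_nonneg fun j _ => sq_nonneg _
  have h1 : 0 < δ^2 * (x ⬝ᵥ x) := mul_pos (by positivity) hxx
  exact add_pos_of_pos_of_nonneg h1 h2


open Matrix

variable {d : ℕ}

lemma dot_self_nonneg (x : Fin d → ℝ) : 0 ≤ x ⬝ᵥ x :=
  Finset.sum_nonneg fun i _ => mul_self_nonneg _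



lemma dot_smul_smul (s t : ℝ) (x y : EuclideanSpace ℝ (Fin d)) :
    dotProduct (fun a => s * x a) (fun a => t * y a) = s * t * ⟪x, y⟫ := by
  simp only [dotProduct, PiLp.inner_apply, RCLike.inner_apply, starRingEnd_apply,
    star_trivial, Finset.mul_sum]
  exact Finset.sum_congr rfl fun a _ => by ring

lemma amgm {μ : Fin d → ℝ} (hμ : ∀ i, 0 ≤ μ i) (hd : 0 < d) :
    ∏ i, μ i ≤ ((∑ i, μ i) / d) ^ d := by
  have hd' : (0:ℝ) < d := Nat.cast_pos.mpr hd
  have h := Real.geom_mean_le_arith_mean_weighted Finset.univ (fun _ => 1/(d:ℝ)) μ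
    (fun i _ => by positivity) (by rw [Finset.sum_const, Finset.card_univ, Fintype.card_fin, nsmul_eq_mul]; field_simp) (fun i _ => hμ i)
  have hL : ∏ i, μ i ^ (1/(d:ℝ)) = (∏ i, μ i) ^ (1/(d:ℝ)) := by
    rw [← Real.finset_prod_rpow _ _ (fun i _ => hμ i)]
  have hR : ∑ i, (1/(d:ℝ)) * μ i = (∑ i, μ i) / d := by
    rw [← Finset.mul_sum]; ring
  rw [hL, hR] at h
  have hprod : 0 ≤ ∏ i, μ i := Finset.prod_nonneg fun i _ => hμ i
  calc ∏ i, μ i = ((∏ i, μ i) ^ (1/(d:ℝ))) ^ (d:ℕ) := by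
        rw [← Real.rpow_natCast ((∏ i, μ i) ^ (1/(d:ℝ))) d, ← Real.rpow_mul hprod]
        rw [one_div, inv_mul_cancel₀ hd'.ne', Real.rpow_one]
    _ ≤ ((∑ i, μ i) / d) ^ (d:ℕ) := pow_le_pow_left₀ (Real.rpow_nonneg hprod _) h _

lemma core {N : ℕ} (hd : 0 < d) {δ : ℝ} (hδ : 0 < δ)
    (u v : ℕ → (Fin d → ℝ))
    (hu : ∀ i < N, u i ⬝ᵥ u i ≤ 1) (hv : ∀ i < N, v i ⬝ᵥ v i ≤ 1)
    (h1 : ∀ i < N, ∑ j ∈ Finset.range i, (u i ⬝ᵥ v j)^2 ≤ δ^2)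
    (h2 : ∀ i < N, δ < |u i ⬝ᵥ v i|) :
    (N:ℝ) * Real.log (3/2) ≤ d * Real.log (1 + N / (d * δ^2)) := by
  have hd' : (0:ℝ) < d := Nat.cast_pos.mpr hd
  set A : ℕ → Matrix (Fin d) (Fin d) ℝ := fun k =>
    δ^2 • (1 : Matrix (Fin d) (Fin d) ℝ) + ∑ j ∈ Finset.range k, vecMulVec (v j) (v j) with hA
  have hpos : ∀ k, (A k).PosDef := fun k => posdef hδ k v
  -- growth of determinants
  have grow : ∀ k, k ≤ N → ((δ^2)^d) * ((3:ℝ)/2)^k ≤ (A k).det := by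
    intro k
    induction k with
    | zero =>
      intro _
      simp only [hA, Finset.range_zero, Finset.sum_empty, add_zero, pow_zero, mul_one]
      rw [Matrix.det_smul, det_one, mul_one]
      simp
    | succ k ih =>
      intro hk
      have hkN : k < N := hk
      have ih' := ih (Nat.le_of_succ_le hk)
      have hstep : A (k+1) = A k + vecMulVec (v k) (v k) := by
        simp only [hA, Finset.sum_range_succ]; rw [add_assoc]
      set w := v k ⬝ᵥ ((A k)⁻¹ *ᵥ v k) with hw
      have hcs := cs_posdef (hpos k) (u k) (v k)
      have hmid : u k ⬝ᵥ (A k *ᵥ u k) ≤ 2 * δ^2 := by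
        rw [hA, quad]
        have hsum : ∑ j ∈ Finset.range k, (v j ⬝ᵥ u k)^2 ≤ δ^2 := by
          calc ∑ j ∈ Finset.range k, (v j ⬝ᵥ u k)^2
              = ∑ j ∈ Finset.range k, (u k ⬝ᵥ v j)^2 :=
                Finset.sum_congr rfl fun j _ => by rw [dotProduct_comm]
            _ ≤ δ^2 := h1 k hkN
        nlinarith [hu k hkN, sq_nonneg δ]
      have hbig : δ^2 < (u k ⬝ᵥ v k)^2 := by
        calc δ^2 < |u k ⬝ᵥ v k|^2 := by
              apply pow_lt_pow_left₀ (h2 k hkN) hδ.le (by norm_num)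
          _ = (u k ⬝ᵥ v k)^2 := sq_abs _
      have hwnn : 0 ≤ w := by
        have hud : IsUnit (A k).det := isUnit_iff_ne_zero.mpr (hpos k).det_pos.ne'
        set z := (A k)⁻¹ *ᵥ v k with hz
        have hAz : A k *ᵥ z = v k := by
          rw [hz, Matrix.mulVec_mulVec, Matrix.mul_nonsing_inv _ hud, Matrix.one_mulVec]
        have hwz : w = z ⬝ᵥ (A k *ᵥ z) := by rw [hAz, hw, hz, dotProduct_comm]
        rw [hwz, hA, quad]
        have := dot_self_nonneg z
        have h2' : 0 ≤ ∑ j ∈ Finset.range k, (v j ⬝ᵥ z)^2 :=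
          Finset.sum_nonneg fun j _ => sq_nonneg _
        nlinarith [sq_nonneg δ]
      have hwhalf : 1/2 < w := by
        have hAu : 0 ≤ u k ⬝ᵥ (A k *ᵥ u k) := by
          rw [hA, quad]
          have := dot_self_nonneg (u k)
          have h2' : 0 ≤ ∑ j ∈ Finset.range k, (v j ⬝ᵥ u k)^2 :=
            Finset.sum_nonneg fun j _ => sq_nonneg _
          nlinarith [sq_nonneg δ]
        nlinarith
      have hdetstep : (A (k+1)).det = (A k).det * (1 + w) := by
        rw [hstep, det_step (hpos k)]
      rw [hdetstep, pow_succ]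
      have hdetpos : 0 < (A k).det := (hpos k).det_pos
      calc (δ^2)^d * (((3:ℝ)/2)^k * (3/2)) = ((δ^2)^d * (3/2)^k) * (3/2) := by ring
        _ ≤ (A k).det * (1 + w) := by
            apply mul_le_mul ih' (by linarith) (by norm_num) hdetpos.le
  -- upper bound on the determinant
  have hH := (hpos N).1
  have hdetprod : (A N).det = ∏ i, hH.eigenvalues i := by
    simpa using hH.det_eq_prod_eigenvalues
  have htr : (A N).trace = ∑ i, hH.eigenvalues i := by
    simpa using hH.trace_eq_sum_eigenvalues
  have htrbound : (A N).trace ≤ δ^2 * d + N := by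
    rw [hA]
    simp only [Matrix.trace_add, Matrix.trace_smul, Matrix.trace_one, Matrix.trace_sum,
      smul_eq_mul, Fintype.card_fin]
    have h1' : ∀ j, (vecMulVec (v j) (v j)).trace = v j ⬝ᵥ v j := by
      intro j
      simp [Matrix.trace, Matrix.diag, vecMulVec_apply, dotProduct]
    have : ∑ j ∈ Finset.range N, (vecMulVec (v j) (v j)).trace ≤ (N:ℝ) := by
      calc ∑ j ∈ Finset.range N, (vecMulVec (v j) (v j)).trace
          ≤ ∑ j ∈ Finset.range N, 1 := by
            apply Finset.sum_le_sum
            intro j hj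
            rw [h1' j]
            exact hv j (Finset.mem_range.mp hj)
        _ = N := by simp
    linarith
  have hdetupper : (A N).det ≤ (δ^2 + N/d)^d := by
    rw [hdetprod]
    calc ∏ i, hH.eigenvalues i ≤ ((∑ i, hH.eigenvalues i) / d)^d :=
          amgm (fun i => ((hpos N).eigenvalues_pos i).le) hd
      _ ≤ (δ^2 + N/d)^d := by
          apply pow_le_pow_left₀ (div_nonneg (Finset.sum_nonneg fun i _ =>
            ((hpos N).eigenvalues_pos i).le) hd'.le)
          rw [← htr]
          rw [div_le_iff₀ hd']
          have : (δ^2 + (N:ℝ)/d) * d = δ^2 * d + N := by field_simp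
          rw [this]
          exact htrbound
  -- take logarithms
  have hlow := grow N le_rfl
  have hLpos : (0:ℝ) < (δ^2)^d * ((3:ℝ)/2)^N := by positivity
  have hlog := Real.log_le_log hLpos (le_trans hlow hdetupper)
  have e1 : Real.log ((δ^2)^d * ((3:ℝ)/2)^N)
      = d * Real.log (δ^2) + N * Real.log (3/2) := by
    rw [Real.log_mul (by positivity) (by positivity), Real.log_pow (δ^2) d,
      Real.log_pow ((3:ℝ)/2) N]
  have e2 : Real.log ((δ^2 + (N:ℝ)/d)^d) = d * Real.log (δ^2 + N/d) :=
    Real.log_pow _ d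
  rw [e1, e2] at hlog
  have hrw : Real.log (δ^2 + N/d) - Real.log (δ^2) = Real.log (1 + N / (d * δ^2)) := by
    rw [← Real.log_div (by positivity) (by positivity)]
    congr 1
    field_simp
  rw [← hrw]
  have expand : (d:ℝ) * (Real.log (δ^2 + N/d) - Real.log (δ^2))
      = d * Real.log (δ^2 + N/d) - d * Real.log (δ^2) := by ring
  rw [expand]
  linarith [hlog]


lemma log_onehalf_facts : 1/3 ≤ Real.log (3/2) ∧ Real.log (3/2) ≤ 1/2 := by
  constructor
  · have h := Real.log_le_sub_one_of_pos (x := 2/3) (by norm_num)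
    have : Real.log (3/2) = - Real.log (2/3) := by
      rw [← Real.log_inv]; norm_num
    rw [this]; linarith
  · have h := Real.log_le_sub_one_of_pos (x := 3/2) (by norm_num)
    linarith

lemma log_two_ge : 1/2 ≤ Real.log 2 := by
  have h := Real.log_le_sub_one_of_pos (x := 1/2) (by norm_num)
  have : Real.log 2 = - Real.log (1/2) := by rw [← Real.log_inv]; norm_num
  rw [this]; linarith

lemma log_one_add_le (m : ℝ) (hm : 0 ≤ m) : Real.log (1 + m) ≤ m/6 + 5 := by
  have hs : Real.log (1+m) ≤ 2 * Real.sqrt (1+m) - 2 := by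
    have h1 : Real.log (1+m) = 2 * Real.log (Real.sqrt (1+m)) := by
      rw [Real.log_sqrt (by linarith)]; ring
    have h2 := Real.log_le_sub_one_of_pos (x := Real.sqrt (1+m))
      (Real.sqrt_pos.mpr (by linarith))
    linarith
  have hsq : Real.sqrt (1+m) ^ 2 = 1 + m := Real.sq_sqrt (by linarith)
  nlinarith [sq_nonneg (Real.sqrt (1+m) - 6)]

lemma resolve {d N : ℕ} (hd : 0 < d) {δ r : ℝ} (hδ : 0 < δ) (hr : 1 ≤ r)
    (hδr : 1 ≤ 2*r*δ)
    (h : (N:ℝ) * Real.log (3/2) ≤ d * Real.log (1 + N / (d * δ^2))) :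
    (N:ℝ) ≤ 100 * d * Real.log (1 + r) := by
  have hd' : (0:ℝ) < d := Nat.cast_pos.mpr hd
  have hN' : (0:ℝ) ≤ N := Nat.cast_nonneg N
  set m : ℝ := (N:ℝ)/d with hm
  have hm0 : 0 ≤ m := by positivity
  set L := Real.log (1 + r) with hL
  have hL2 : 1/2 ≤ L := by
    have : Real.log 2 ≤ L := by
      apply Real.log_le_log (by norm_num)
      linarith
    linarith [log_two_ge]
  -- 1/δ² ≤ 4 r²
  have hdelta : 1/δ^2 ≤ 4*r^2 := by
    rw [div_le_iff₀ (by positivity)]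
    nlinarith
  -- bound the argument of the log
  have harg : 1 + (N:ℝ)/(d*δ^2) ≤ (1+m)*(1+4*r^2) := by
    have e : (N:ℝ)/(d*δ^2) = m * (1/δ^2) := by
      rw [hm]; field_simp
    rw [e]
    have : m * (1/δ^2) ≤ m * (4*r^2) := by
      apply mul_le_mul_of_nonneg_left hdelta hm0
    nlinarith
  have hargpos : (0:ℝ) < 1 + (N:ℝ)/(d*δ^2) := by positivity
  have hlog1 : Real.log (1 + (N:ℝ)/(d*δ^2)) ≤ Real.log (1+m) + Real.log (1+4*r^2) := by
    calc Real.log (1 + (N:ℝ)/(d*δ^2)) ≤ Real.log ((1+m)*(1+4*r^2)) :=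
          Real.log_le_log hargpos harg
      _ = Real.log (1+m) + Real.log (1+4*r^2) :=
          Real.log_mul (by positivity) (by positivity)
  have hlog2 : Real.log (1+4*r^2) ≤ 4 * L := by
    calc Real.log (1+4*r^2) ≤ Real.log ((1+r)^4) := by
          apply Real.log_le_log (by positivity)
          nlinarith
      _ = 4 * L := by rw [Real.log_pow, hL]; norm_num
  have hlog3 := log_one_add_le m hm0
  -- combine
  have hmain : m * Real.log (3/2) ≤ Real.log (1 + (N:ℝ)/(d*δ^2)) := by
    rw [hm, div_mul_eq_mul_div, div_le_iff₀ hd']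
    calc (N:ℝ) * Real.log (3/2) ≤ d * Real.log (1 + N / (d * δ^2)) := h
      _ = Real.log (1 + (N:ℝ)/(d*δ^2)) * d := by ring
  have hc := log_onehalf_facts
  have : m * (1/3) ≤ m/6 + 5 + 4*L := by
    calc m * (1/3) ≤ m * Real.log (3/2) := by
          apply mul_le_mul_of_nonneg_left hc.1 hm0
      _ ≤ Real.log (1+m) + Real.log (1+4*r^2) := le_trans hmain hlog1
      _ ≤ m/6 + 5 + 4*L := by linarith
  have hmL : m ≤ 84 * L := by linarith
  have : (N:ℝ) = m * d := by rw [hm]; field_simp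
  rw [this]
  calc m * d ≤ (84*L) * d := by
        apply mul_le_mul_of_nonneg_right hmL hd'.le
    _ ≤ 100 * d * L := by nlinarith


open scoped RealInnerProductSpace
lemma take_map_sum {α : Type*} (f : α → ℝ) (l : List α) :
    ∀ (k : ℕ) (hk : k ≤ l.length),
      ((l.take k).map f).sum = ∑ j : Fin k, f (l.get (Fin.castLE hk j)) := by
  intro k hk
  induction k with
  | zero => simp
  | succ k ih =>
    have hk' : k ≤ l.length := Nat.le_of_succ_le hk
    rw [List.map_take, List.sum_take_succ _ _ (by simpa using hk), ← List.map_take,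
      ih hk', Fin.sum_univ_castSucc]
    have e1 : ∑ j : Fin k, f (l.get (Fin.castLE hk' j))
        = ∑ i : Fin k, f (l.get (Fin.castLE hk i.castSucc)) :=
      Finset.sum_congr rfl fun j _ => by congr 1
    have e2 : (List.map f l)[k]'(by simpa using hk) = f (l.get (Fin.castLE hk (Fin.last k))) := by
      rw [List.getElem_map]
      rfl
    rw [e1, e2]
-- inspect
example : True := trivial

end EluderAux
open EluderAux

/-- There is a universal constant `C > 0` such that for all
`d`, `τ, γ > 0` and `ε ∈ (0, τγ]`, `d_E(F_lin, ε) ≤ C·d·log(1 + τγ/ε)`. -/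
theorem eluderDim_linClass_le :
    ∃ C : ℝ, 0 < C ∧ ∀ (d : ℕ) (τ γ : ℝ), 0 < τ → 0 < γ →
      ∀ ε : ℝ, ε ∈ Set.Ioc 0 (τ * γ) →
        (eluderDim (linClass d τ γ) ε : ℝ) ≤ C * d * Real.log (1 + τ * γ / ε) := by
  refine ⟨100, by norm_num, ?_⟩
  intro d τ γ hτ hγ ε ⟨hε0, hεle⟩
  set r : ℝ := τ * γ / ε with hr_def
  have hr1 : 1 ≤ r := (one_le_div hε0).mpr hεle
  have hLnn : 0 ≤ Real.log (1 + r) := Real.log_nonneg (by linarith)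
  -- the key bound for any element of the length set
  have key : ∀ k ∈ eluderLengths (linClass d τ γ) ε,
      (k:ℝ) ≤ 100 * d * Real.log (1 + r) := by
    rintro k ⟨xs, hlen, ε', hε'ge, hind⟩
    subst hlen
    set N := xs.length with hN
    have hε'0 : 0 < ε' := lt_of_lt_of_le hε0 hε'ge
    -- extraction
    have key1 : ∀ i : Fin N, ∃ ρ : EuclideanSpace ℝ (Fin d), ‖ρ‖ ≤ 2*τ ∧
        (∑ j : Fin (i:ℕ), ⟪ρ, (xs.get (Fin.castLE i.2.le j)).1⟫^2 ≤ ε'^2) ∧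
        ε' < |⟪ρ, (xs.get i).1⟫| := by
      intro i
      have h := hind i
      rw [EpsDependent] at h
      push_neg at h
      obtain ⟨g₁, hg₁, g₂, hg₂, hsmall, hbig⟩ := h
      obtain ⟨θ₁, hθ₁, rfl⟩ := hg₁
      obtain ⟨θ₂, hθ₂, rfl⟩ := hg₂
      refine ⟨θ₁ - θ₂, ?_, ?_, ?_⟩
      · calc ‖θ₁ - θ₂‖ ≤ ‖θ₁‖ + ‖θ₂‖ := norm_sub_le _ _
          _ ≤ 2*τ := by linarith
      · have hfun : (fun y : {x : EuclideanSpace ℝ (Fin d) // ‖x‖ ≤ γ} =>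
            ‖⟪θ₁, y.1⟫ - ⟪θ₂, y.1⟫‖ ^ 2) = fun y => ⟪θ₁ - θ₂, y.1⟫^2 := by
          funext y
          rw [← inner_sub_left, Real.norm_eq_abs, sq_abs]
        rw [hfun] at hsmall
        rw [take_map_sum _ _ _ i.2.le] at hsmall
        have hsum_nn : 0 ≤ ∑ j : Fin (i:ℕ), ⟪θ₁ - θ₂, (xs.get (Fin.castLE i.2.le j)).1⟫^2 :=
          Finset.sum_nonneg fun j _ => sq_nonneg _
        calc ∑ j : Fin (i:ℕ), ⟪θ₁ - θ₂, (xs.get (Fin.castLE i.2.le j)).1⟫^2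
            = Real.sqrt (∑ j : Fin (i:ℕ), ⟪θ₁ - θ₂, (xs.get (Fin.castLE i.2.le j)).1⟫^2)^2 :=
              (Real.sq_sqrt hsum_nn).symm
          _ ≤ ε'^2 := pow_le_pow_left₀ (Real.sqrt_nonneg _) hsmall 2
      · rw [← inner_sub_left, Real.norm_eq_abs] at hbig
        exact hbig
    choose ρ hρ1 hρ2 hρ3 using key1
    -- handle d = 0
    rcases Nat.eq_zero_or_pos d with hd0 | hd
    · have hN0 : N = 0 := by
        by_contra hN0
        have i0 : Fin N := ⟨0, Nat.pos_of_ne_zero hN0⟩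
        have := hρ3 i0
        have hz : ⟪ρ i0, (xs.get i0).1⟫ = 0 := by
          subst hd0
          simp [PiLp.inner_apply]
        rw [hz] at this
        simp at this
        linarith
      rw [hN0, hd0]
      simp
    -- normalized vectors
    set u : ℕ → (Fin d → ℝ) := fun n =>
      if h : n < N then (fun a => (2*τ)⁻¹ * (ρ ⟨n,h⟩) a) else 0 with hu_def
    set v : ℕ → (Fin d → ℝ) := fun n =>
      if h : n < N then (fun a => γ⁻¹ * ((xs.get ⟨n,h⟩).1 a)) else 0 with hv_def
    set δ : ℝ := ε' / (2*τ*γ) with hδ_def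
    have hδ0 : 0 < δ := by positivity
    have hcore : (N:ℝ) * Real.log (3/2) ≤ d * Real.log (1 + N / (d * δ^2)) := by
      apply core hd hδ0 u v
      · intro i hi
        simp only [hu_def, dif_pos hi]
        rw [dot_smul_smul, real_inner_self_eq_norm_sq]
        have := hρ1 ⟨i, hi⟩
        have h2τ : (0:ℝ) < 2*τ := by linarith
        rw [← mul_inv]
        rw [inv_mul_le_iff₀ (by positivity), mul_one]
        nlinarith [norm_nonneg (ρ ⟨i,hi⟩)]
      · intro i hi
        simp only [hv_def, dif_pos hi]
        rw [dot_smul_smul, real_inner_self_eq_norm_sq]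
        have := (xs.get ⟨i,hi⟩).2
        rw [← mul_inv]
        rw [inv_mul_le_iff₀ (by positivity), mul_one]
        nlinarith [norm_nonneg (xs.get ⟨i,hi⟩).1]
      · intro i hi
        have hsum := hρ2 ⟨i, hi⟩
        have h2τγ : (0:ℝ) < 2*τ*γ := by positivity
        rw [Finset.sum_range (fun j => (dotProduct (u i) (v j))^2)]
        have e : ∀ j : Fin i, (dotProduct (u i) (v j.1))^2
            = ((2*τ)⁻¹ * γ⁻¹)^2
              * ⟪ρ ⟨i,hi⟩, (xs.get (Fin.castLE (le_of_lt hi) j)).1⟫^2 := by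
          intro j
          have hjN : j.1 < N := lt_trans j.2 hi
          simp only [hu_def, hv_def, dif_pos hi, dif_pos hjN]
          rw [dot_smul_smul, mul_pow]
          congr 3
        calc ∑ j : Fin i, (dotProduct (u i) (v j.1))^2
            = ∑ j : Fin i, ((2*τ)⁻¹ * γ⁻¹)^2
              * ⟪ρ ⟨i,hi⟩, (xs.get (Fin.castLE (le_of_lt hi) j)).1⟫^2 :=
              Finset.sum_congr rfl fun j _ => e j
          _ = ((2*τ)⁻¹ * γ⁻¹)^2
              * ∑ j : Fin i, ⟪ρ ⟨i,hi⟩, (xs.get (Fin.castLE (le_of_lt hi) j)).1⟫^2 := by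
              rw [Finset.mul_sum]
          _ ≤ ((2*τ)⁻¹ * γ⁻¹)^2 * ε'^2 := by
              apply mul_le_mul_of_nonneg_left hsum (by positivity)
          _ = δ^2 := by rw [hδ_def]; field_simp
      · intro i hi
        simp only [hu_def, hv_def, dif_pos hi]
        rw [dot_smul_smul]
        have := hρ3 ⟨i, hi⟩
        rw [abs_mul, abs_of_pos (by positivity : (0:ℝ) < (2*τ)⁻¹ * γ⁻¹)]
        have h2τγ : (0:ℝ) < 2*τ*γ := by positivity
        have e2 : (2*τ)⁻¹ * γ⁻¹ * |⟪ρ ⟨i,hi⟩, (xs.get ⟨i,hi⟩).1⟫|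
            = |⟪ρ ⟨i,hi⟩, (xs.get ⟨i,hi⟩).1⟫| / (2*τ*γ) := by
          field_simp
        rw [e2, hδ_def]
        gcongr
    have := resolve hd hδ0 hr1 (by
      rw [hδ_def, hr_def]
      have : 2 * (τ*γ/ε) * (ε'/(2*τ*γ)) = ε'/ε := by field_simp
      rw [this]
      rw [le_div_iff₀ hε0, one_mul]
      exact hε'ge) hcore
    exact this
  -- conclude via sSup
  have hne : (eluderLengths (linClass d τ γ) ε).Nonempty := by
    refine ⟨0, [], rfl, ε, le_refl _, ?_⟩
    intro i
    exact absurd i.isLt (Nat.not_lt_zero _)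
  have hbdd : BddAbove (eluderLengths (linClass d τ γ) ε) := by
    refine ⟨⌈100 * d * Real.log (1 + r)⌉₊, fun k hk => ?_⟩
    have := key k hk
    have h2 : (k:ℝ) ≤ (⌈100 * d * Real.log (1 + r)⌉₊ : ℝ) := le_trans this (Nat.le_ceil _)
    exact_mod_cast h2
  have hmem := Nat.sSup_mem hne hbdd
  exact key _ hmem

end
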